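/- Correctness of the aggregate verification: with shared base A = H_1(t) ∈ G, secret keys (x_i, y_i), public keys X̃_i = G̃^{x_i}, Ỹ_i = G̃^{y_i}, hashed messages m'_i ∈ Z_p, and aggregate B' = ∏_{i=1}^ℓ A^{x_i + m'_i·y_i}, we have e(A, ∏_{i=1}^ℓ X̃_i · Ỹ_i^{m'_i}) = e(B', G̃). -/
import Mathlib


/-- Exponentiation of a group element by a scalar in `ZMod p`. -/
def zmp {G : Type*} [Monoid G] {p : ℕ} (a : G) (s : ZMod p) : G := a ^ s.val

lemma zmp_mod {G : Type*} [Group G] [Fintype G] {p : ℕ}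
    (hG : Fintype.card G = p) (a : G) (n : ℕ) : a ^ (n % p) = a ^ n := by
  conv_rhs => rw [← Nat.mod_add_div n p]
  rw [pow_add, pow_mul, ← hG, pow_card_eq_one, one_pow, mul_one]

lemma zmp_add {G : Type*} [Group G] [Fintype G] {p : ℕ} [NeZero p]
    (hG : Fintype.card G = p) (a : G) (s t : ZMod p) :
    zmp a (s + t) = zmp a s * zmp a t := by
  simp only [zmp, ZMod.val_add, zmp_mod hG, pow_add]

lemma zmp_mul {G : Type*} [Group G] [Fintype G] {p : ℕ} [NeZero p]
    (hG : Fintype.card G = p) (a : G) (s t : ZMod p) :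
    zmp (zmp a s) t = zmp a (s * t) := by
  simp only [zmp, ZMod.val_mul, zmp_mod hG, ← pow_mul]

lemma zmp_one {G : Type*} [Group G] {p : ℕ} (hp : 1 < p) (a : G) :
    zmp a (1 : ZMod p) = a := by
  have : ((1 : ZMod p)).val = 1 := ZMod.val_one_eq_one_mod p ▸ Nat.mod_eq_of_lt hp
  simp [zmp, this]

lemma zmp_sum {G : Type*} [CommGroup G] [Fintype G] {p : ℕ} [NeZero p]
    (hG : Fintype.card G = p) (a : G) {ℓ : ℕ} (c : Fin ℓ → ZMod p) :
    ∏ i, zmp a (c i) = zmp a (∑ i, c i) := by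
  induction ℓ with
  | zero => simp [zmp]
  | succ n ih =>
      rw [Fin.prod_univ_castSucc, Fin.sum_univ_castSucc, zmp_add hG,
        ih (fun i => c i.castSucc)]

theorem stmt_3 {p : ℕ} (hp : p.Prime)
    {G Gt GT : Type*} [CommGroup G] [CommGroup Gt] [CommGroup GT]
    [Fintype G] [Fintype Gt] [Fintype GT]
    (hG : Fintype.card G = p) (hGt : Fintype.card Gt = p) (hGT : Fintype.card GT = p)
    (e : G → Gt → GT)
    (he : ∀ (X : G) (Y : Gt) (a b : ZMod p), e (zmp X a) (zmp Y b) = zmp (e X Y) (a * b))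
    (G₀ : Gt) (A : G) (ℓ : ℕ)
    (x y m' : Fin ℓ → ZMod p) (Xt Yt : Fin ℓ → Gt)
    (hX : ∀ i, Xt i = zmp G₀ (x i)) (hY : ∀ i, Yt i = zmp G₀ (y i))
    (B' : G) (hB' : B' = ∏ i, zmp A (x i + m' i * y i)) :
    e A (∏ i, Xt i * zmp (Yt i) (m' i)) = e B' G₀ := by
  haveI : NeZero p := ⟨hp.ne_zero⟩
  have h1 : 1 < p := hp.one_lt
  have key : ∀ i, Xt i * zmp (Yt i) (m' i) = zmp G₀ (x i + m' i * y i) := by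
    intro i
    rw [hX, hY, zmp_mul hGt, zmp_add hGt, mul_comm (y i) (m' i)]
  calc e A (∏ i, Xt i * zmp (Yt i) (m' i))
      = e (zmp A 1) (zmp G₀ (∑ i, (x i + m' i * y i))) := by
        rw [zmp_one h1]
        congr 1
        simp_rw [key]
        exact zmp_sum hGt G₀ _
    _ = zmp (e A G₀) (1 * ∑ i, (x i + m' i * y i)) := he _ _ _ _
    _ = zmp (e A G₀) ((∑ i, (x i + m' i * y i)) * 1) := by rw [one_mul, mul_one]
    _ = e (zmp A (∑ i, (x i + m' i * y i))) (zmp G₀ 1) := (he _ _ _ _).symm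
    _ = e B' G₀ := by rw [zmp_one h1, hB', zmp_sum hG]
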